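/- For every natural number m, the integral ∫_{ℂ²} |z_2|^{2m} (|z_1|⁴ + 2|z_1|² + |z_2|² + 1) exp(−(½|z_1|⁴ + |z_1|²|z_2|² + |z_1|²)) dλ(z_1, z_2) is infinite (equals +∞). In other words, no monomial z_2^m belongs to the weighted Bergman space A²(ℂ², h, e^{−ψ}) of the Kähler metric with potential χ(z_1,z_2) = ¼|z_1|⁴ + |z_1|²|z_2|² + |z_1|² + |z_2|² and weight ψ(z_1,z_2) = ½|z_1|⁴ + |z_1|²|z_2|² + |z_1|². -/

import Mathlib

open Complex MeasureTheory Finset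

noncomputable section

/-- The density `e^{−ψ} det(h) = (|z₁|⁴ + 2|z₁|² + |z₂|² + 1)
exp(−(½|z₁|⁴ + |z₁|²|z₂|² + |z₁|²))` of the weighted Bergman space on `ℂ²`
with Kähler potential `¼|z₁|⁴ + |z₁|²|z₂|² + |z₁|² + |z₂|²` and weight
`½|z₁|⁴ + |z₁|²|z₂|² + |z₁|²`. -/
def bergW (z : Fin 2 → ℂ) : ℝ :=
  ((Complex.normSq (z 0)) ^ 2 + 2 * Complex.normSq (z 0) +
      Complex.normSq (z 1) + 1) *
    Real.exp (-((1 / 2) * (Complex.normSq (z 0)) ^ 2 +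
      Complex.normSq (z 0) * Complex.normSq (z 1) + Complex.normSq (z 0)))

/-- Two-variable version of the Bergman density. -/
def bergW2 (x y : ℂ) : ℝ :=
  ((Complex.normSq x) ^ 2 + 2 * Complex.normSq x + Complex.normSq y + 1) *
    Real.exp (-((1 / 2) * (Complex.normSq x) ^ 2 +
      Complex.normSq x * Complex.normSq y + Complex.normSq x))

lemma measurable_normSq' : Measurable Complex.normSq :=
  Complex.continuous_normSq.measurable

/-- The minorant: on the region where `|z₁|² ≤ 1/(1+|z₂|²)` and `|z₂|² ≥ 1`
the integrand is at least `e^{-5/2}|z₂|²`. -/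
def minor (p : ℂ × ℂ) : ENNReal :=
  if Complex.normSq p.1 ≤ 1 / (1 + Complex.normSq p.2) ∧ 1 ≤ Complex.normSq p.2
  then ENNReal.ofReal (Real.exp (-(5/2)) * Complex.normSq p.2) else 0

lemma minor_le (m : ℕ) (p : ℂ × ℂ) :
    minor p ≤ ENNReal.ofReal (Complex.normSq p.2 ^ m * bergW2 p.1 p.2) := by
  unfold minor
  split_ifs with h
  · obtain ⟨h1, h2⟩ := h
    apply ENNReal.ofReal_le_ofReal
    set a := Complex.normSq p.1 with ha
    set b := Complex.normSq p.2 with hb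
    have hb0 : (0:ℝ) ≤ b := Complex.normSq_nonneg _
    have ha0 : (0:ℝ) ≤ a := Complex.normSq_nonneg _
    have hb1 : (0:ℝ) < 1 + b := by linarith
    have haa : a ≤ 1 := by
      have : 1 / (1 + b) ≤ 1 := by
        rw [div_le_one hb1]; linarith
      linarith
    have hab : a * b ≤ 1 := by
      have h1' : a * (1 + b) ≤ 1 := (le_div_iff₀ hb1).mp h1
      nlinarith
    -- exponential comparison
    have hexp : Real.exp (-(5/2)) ≤
        Real.exp (-((1/2) * a ^ 2 + a * b + a)) := by
      apply Real.exp_le_exp.mpr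
      nlinarith [sq_nonneg a, sq_nonneg (a - 1)]
    have hpow : (1:ℝ) ≤ b ^ m := one_le_pow₀ h2
    have hpoly : b ≤ a ^ 2 + 2 * a + b + 1 := by nlinarith
    unfold bergW2
    calc Real.exp (-(5/2)) * b
        = 1 * (b * Real.exp (-(5/2))) := by ring
      _ ≤ b ^ m * ((a ^ 2 + 2 * a + b + 1) *
            Real.exp (-((1/2) * a ^ 2 + a * b + a))) := by
          apply mul_le_mul hpow ?_ (by positivity) (by positivity)
          apply mul_le_mul hpoly hexp (Real.exp_nonneg _)
            (by positivity)
  · exact zero_le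

lemma measurable_minor : Measurable minor := by
  unfold minor
  apply Measurable.ite
  · apply MeasurableSet.inter
    · exact measurableSet_le (measurable_normSq'.comp measurable_fst)
        ((measurable_const.div
          (measurable_const.add (measurable_normSq'.comp measurable_snd))))
    · exact measurableSet_le measurable_const
        (measurable_normSq'.comp measurable_snd)
  · exact (measurable_const.mul
      (measurable_normSq'.comp measurable_snd)).ennreal_ofReal
  · exact measurable_const

lemma ball_set_eq (R : ℝ) (hR : 0 ≤ R) :
    {x : ℂ | Complex.normSq x ≤ R} = Metric.closedBall 0 (Real.sqrt R) := by
  ext x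
  simp only [Set.mem_setOf_eq, Metric.mem_closedBall, dist_zero_right]
  rw [Complex.normSq_eq_norm_sq]
  exact ((Real.le_sqrt (norm_nonneg x) hR).symm)

lemma inner_bound (y : ℂ) (hy : 1 ≤ Complex.normSq y) :
    ENNReal.ofReal (Real.exp (-(5/2)) * (Real.pi / 2)) ≤
      ∫⁻ x : ℂ, minor (x, y) := by
  set b := Complex.normSq y with hb
  have hb0 : (0:ℝ) ≤ b := Complex.normSq_nonneg _
  have hb1 : (0:ℝ) < 1 + b := by linarith
  set R : ℝ := 1 / (1 + b) with hRdef
  have hR0 : 0 ≤ R := by positivity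
  have hminor : ∀ x : ℂ, minor (x, y) =
      Set.indicator {x : ℂ | Complex.normSq x ≤ R}
        (fun _ => ENNReal.ofReal (Real.exp (-(5/2)) * b)) x := by
    intro x
    rw [Set.indicator_apply]
    unfold minor
    simp only [Set.mem_setOf_eq, ← hb, ← hRdef, hy, and_true]
  have hmeas : MeasurableSet {x : ℂ | Complex.normSq x ≤ R} := by
    rw [ball_set_eq R hR0]; exact measurableSet_closedBall
  have hvol : volume {x : ℂ | Complex.normSq x ≤ R} = ENNReal.ofReal (R * Real.pi) := by
    rw [ball_set_eq R hR0, Complex.volume_closedBall, ← ENNReal.ofReal_pow (Real.sqrt_nonneg R),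
      Real.sq_sqrt hR0, ENNReal.ofReal_mul hR0, ← NNReal.coe_real_pi,
      ENNReal.ofReal_coe_nnreal]
  have hint : (∫⁻ x : ℂ, minor (x, y)) =
      ENNReal.ofReal (Real.exp (-(5/2)) * b) * ENNReal.ofReal (R * Real.pi) := by
    rw [lintegral_congr hminor, lintegral_indicator hmeas, setLIntegral_const, hvol]
  rw [hint, ← ENNReal.ofReal_mul (by positivity)]
  apply ENNReal.ofReal_le_ofReal
  have h1 : (1:ℝ) / 2 ≤ b * R := by
    rw [hRdef, mul_one_div, le_div_iff₀ hb1]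
    linarith
  have hc := mul_le_mul_of_nonneg_left h1
    (mul_nonneg (Real.exp_nonneg (-(5/2))) Real.pi_pos.le)
  nlinarith [hc]

lemma compl_ball_volume : volume ((Metric.ball (0:ℂ) 1)ᶜ) = ⊤ := by
  by_contra h
  have h1 : (⊤ : ENNReal) ≤
      volume (Metric.ball (0:ℂ) 1) + volume ((Metric.ball (0:ℂ) 1)ᶜ) := by
    calc (⊤ : ENNReal) = volume (Set.univ : Set ℂ) :=
          (measure_univ_of_isAddLeftInvariant (volume : Measure ℂ)).symm
      _ = volume (Metric.ball (0:ℂ) 1 ∪ (Metric.ball (0:ℂ) 1)ᶜ) := by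
          rw [Set.union_compl_self]
      _ ≤ _ := measure_union_le _ _
  have h2 : volume (Metric.ball (0:ℂ) 1) + volume ((Metric.ball (0:ℂ) 1)ᶜ) < ⊤ :=
    ENNReal.add_lt_top.mpr ⟨measure_ball_lt_top, lt_top_iff_ne_top.mpr h⟩
  exact absurd h1 h2.not_ge

lemma outer_top :
    (∫⁻ y : ℂ, ∫⁻ x : ℂ, minor (x, y)) = ⊤ := by
  set κ : ENNReal := ENNReal.ofReal (Real.exp (-(5/2)) * (Real.pi / 2)) with hκ
  have hκ0 : κ ≠ 0 := by
    rw [hκ]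
    simp only [ne_eq, ENNReal.ofReal_eq_zero, not_le]
    positivity
  have hsub : (Metric.ball (0:ℂ) 1)ᶜ ⊆ {y : ℂ | 1 ≤ Complex.normSq y} := by
    intro y hy
    simp only [Set.mem_compl_iff, Metric.mem_ball, dist_zero_right, not_lt] at hy
    have : Complex.normSq y = ‖y‖ ^ 2 := by
      rw [Complex.normSq_eq_norm_sq]
    rw [Set.mem_setOf_eq, this]
    nlinarith
  have hvol : volume {y : ℂ | 1 ≤ Complex.normSq y} = ⊤ :=
    top_le_iff.mp (compl_ball_volume ▸ measure_mono hsub)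
  have hmeas : MeasurableSet {y : ℂ | 1 ≤ Complex.normSq y} :=
    measurableSet_le measurable_const measurable_normSq'
  have hge : (∫⁻ y : ℂ, Set.indicator {y : ℂ | 1 ≤ Complex.normSq y} (fun _ => κ) y) ≤
      ∫⁻ y : ℂ, ∫⁻ x : ℂ, minor (x, y) := by
    apply lintegral_mono
    intro y
    rw [Set.indicator_apply]
    split_ifs with h
    · exact inner_bound y h
    · exact zero_le
  rw [lintegral_indicator hmeas, setLIntegral_const, hvol, ENNReal.mul_top hκ0] at hge
  exact top_le_iff.mp hge

/-- no monomial `z₂^m` belongs to the weighted Bergman space: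
its squared norm `∫ |z₂|^{2m} e^{−ψ} det(h) dλ` is infinite. -/
theorem stmt14 (m : ℕ) :
    (∫⁻ z : Fin 2 → ℂ,
      ENNReal.ofReal ((Complex.normSq (z 1)) ^ m * bergW z) ∂volume) = ⊤ := by
  have hequiv : (∫⁻ z : Fin 2 → ℂ,
      ENNReal.ofReal ((Complex.normSq (z 1)) ^ m * bergW z) ∂volume) =
      ∫⁻ p : ℂ × ℂ,
        ENNReal.ofReal ((Complex.normSq p.2) ^ m * bergW2 p.1 p.2) ∂volume :=
    ((volume_preserving_piFinTwo (fun _ : Fin 2 => ℂ)).lintegral_map_equiv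
      (fun p : ℂ × ℂ =>
        ENNReal.ofReal ((Complex.normSq p.2) ^ m * bergW2 p.1 p.2))).symm
  rw [hequiv]
  rw [eq_top_iff]
  calc (⊤ : ENNReal) = ∫⁻ p : ℂ × ℂ, minor p ∂volume := by
        rw [MeasureTheory.Measure.volume_eq_prod, lintegral_prod_symm' minor measurable_minor]
        exact outer_top.symm
    _ ≤ _ := lintegral_mono (minor_le m)
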